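/- Let ι be a nonempty finite index set, ε > 0, α > 1, and let p, q : ι → ℝ be probability vectors with all entries positive satisfying exp(−ε) ≤ p i / q i ≤ exp(ε) for all i (i.e., the pair is ε-pure-DP indistinguishable). Then Σ_i p i^α · q i^(1−α) ≤ (sinh(α·ε) − sinh((α−1)·ε)) / sinh(ε); equivalently, the Rényi divergence of order α satisfies D_α(p‖q) ≤ (1/(α−1))·log( (sinh(α·ε) − sinh((α−1)·ε)) / sinh(ε) ). -/

import Mathlib

theorem bounded_range_renyi_sinh_bound {ι : Type*} [Fintype ι] [Nonempty ι]
    (ε α : ℝ) (hε : 0 < ε) (hα : 1 < α)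
    (p q : ι → ℝ) (hp : ∀ i, 0 < p i) (hq : ∀ i, 0 < q i)
    (hps : ∑ i, p i = 1) (hqs : ∑ i, q i = 1)
    (hratio : ∀ i, Real.exp (-ε) ≤ p i / q i ∧ p i / q i ≤ Real.exp ε) :
    ∑ i, p i ^ α * q i ^ (1 - α) ≤
      (Real.sinh (α * ε) - Real.sinh ((α - 1) * ε)) / Real.sinh ε := by
  set a := Real.exp (-ε) with ha_def
  set b := Real.exp ε with hb_def
  have ha : 0 < a := Real.exp_pos _
  have hb : 0 < b := Real.exp_pos _
  have hab : a < b := Real.exp_lt_exp.mpr (by linarith)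
  have hba : 0 < b - a := by linarith
  have haα : a ^ α = Real.exp (-(ε * α)) := by
    rw [ha_def, Real.rpow_def_of_pos (Real.exp_pos _), Real.log_exp]; ring_nf
  have hbα : b ^ α = Real.exp (ε * α) := by
    rw [hb_def, Real.rpow_def_of_pos (Real.exp_pos _), Real.log_exp]
  set A := (b * a ^ α - a * b ^ α) / (b - a) with hA_def
  set B := (b ^ α - a ^ α) / (b - a) with hB_def
  have key : ∀ i, p i ^ α * q i ^ (1 - α) ≤ q i * A + B * p i := by
    intro i
    have hqi := hq i
    have hpi := hp i
    set t := p i / q i with ht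
    have hta : a ≤ t := (hratio i).1
    have htb : t ≤ b := (hratio i).2
    have heq : p i ^ α * q i ^ (1 - α) = q i * t ^ α := by
      rw [ht, Real.div_rpow hpi.le hqi.le, Real.rpow_sub hqi, Real.rpow_one]
      field_simp
    have hchord : t ^ α ≤ A + B * t := by
      have conv := convexOn_rpow (le_of_lt hα)
      have hlam : (0:ℝ) ≤ (b - t) / (b - a) := by
        apply div_nonneg <;> linarith
      have hmu : (0:ℝ) ≤ (t - a) / (b - a) := by
        apply div_nonneg <;> linarith
      have hsum : (b - t) / (b - a) + (t - a) / (b - a) = 1 := by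
        field_simp; ring
      have hcx := conv.2 (le_of_lt ha : a ∈ Set.Ici (0:ℝ))
        (le_of_lt hb : b ∈ Set.Ici (0:ℝ)) hlam hmu hsum
      simp only [smul_eq_mul] at hcx
      have hcomb : (b - t) / (b - a) * a + (t - a) / (b - a) * b = t := by
        field_simp; ring
      rw [hcomb] at hcx
      refine hcx.trans (le_of_eq ?_)
      rw [hA_def, hB_def]
      field_simp
      ring
    rw [heq]
    calc q i * t ^ α ≤ q i * (A + B * t) :=
          mul_le_mul_of_nonneg_left hchord hqi.le
      _ = q i * A + B * (q i * t) := by ring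
      _ = q i * A + B * p i := by rw [ht]; field_simp
  have hsum_le : ∑ i, p i ^ α * q i ^ (1 - α) ≤ A + B := by
    calc ∑ i, p i ^ α * q i ^ (1 - α) ≤ ∑ i, (q i * A + B * p i) :=
          Finset.sum_le_sum fun i _ => key i
      _ = (∑ i, q i) * A + B * ∑ i, p i := by
          rw [Finset.sum_add_distrib, ← Finset.sum_mul, ← Finset.mul_sum]
      _ = A + B := by rw [hps, hqs]; ring
  refine hsum_le.trans (le_of_eq ?_)
  have hsinh : 0 < Real.sinh ε := Real.sinh_pos_iff.mpr hε
  have hba2 : b - a = 2 * Real.sinh ε := by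
    rw [Real.sinh_eq, ha_def, hb_def]; ring
  have e1 : b * a ^ α = Real.exp (-((α - 1) * ε)) := by
    rw [haα, hb_def, ← Real.exp_add]; ring_nf
  have e2 : a * b ^ α = Real.exp ((α - 1) * ε) := by
    rw [hbα, ha_def, ← Real.exp_add]; ring_nf
  have e3 : b ^ α = Real.exp (α * ε) := by rw [hbα]; ring_nf
  have e4 : a ^ α = Real.exp (-(α * ε)) := by rw [haα]; ring_nf
  have hAB : A + B = (Real.exp (-((α - 1) * ε)) - Real.exp ((α - 1) * ε)
      + (Real.exp (α * ε) - Real.exp (-(α * ε)))) / (2 * Real.sinh ε) := by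
    rw [hA_def, hB_def, ← add_div, e1, e2, e3, e4, hba2]
  rw [hAB, Real.sinh_eq (α * ε), Real.sinh_eq ((α - 1) * ε)]
  field_simp
  ring
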